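/- arXiv:1105.4514 — 4 statements merged into one kernel-verified Lean document; each statement's English description precedes it below -/
import Mathlib

section
/- Let m ≥ 2 and let A : ℕ → Fin m be purely periodic with least period k ≥ 2. If an m-ary n-stage machine generates A (outputting the 0-th stage each clock cycle, one digit per cycle), then n ≥ ⌈log_m N_max⌉ + 1, where N_max = max_{i ∈ Fin m} N_i and N_i is the number of occurrences of digit i in one period of A. -/
theorem stmt_4 (m n k : ℕ) (hm : 2 ≤ m) (hk : 2 ≤ k) (hn : 0 < n) (A : ℕ → Fin m)
    (hper : ∀ t, A (t + k) = A t)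
    (hleast : ∀ k', 0 < k' → (∀ t, A (t + k') = A t) → k ≤ k')
    (F : (Fin n → Fin m) → (Fin n → Fin m)) (σ₀ : Fin n → Fin m)
    (hout : ∀ t, (F^[t] σ₀) ⟨0, hn⟩ = A t) :
    n ≥ Nat.clog m (Finset.univ.sup fun i : Fin m =>
        ((Finset.range k).filter (fun j => A j = i)).card) + 1 := by
  -- pure periodicity iterated
  have hperN : ∀ N t, A (t + N * k) = A t := by
    intro N
    induction N with
    | zero => simp
    | succ N ih => intro t; rw [Nat.succ_mul, ← Nat.add_assoc, hper, ih]
  -- injectivity of t ↦ F^[t] σ₀ on range k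
  have hinj : ∀ t t', t < k → t' < k → F^[t] σ₀ = F^[t'] σ₀ → t = t' := by
    have key : ∀ t t', t ≤ t' → t < k → t' < k → F^[t] σ₀ = F^[t'] σ₀ → t = t' := by
      intro t t' hle ht ht' heq
      by_contra hne
      set d := t' - t with hd
      have hdpos : 0 < d := by omega
      have hA : ∀ s, A (s + d) = A s := by
        intro s
        -- pick N with s + N * k ≥ t
        have hkpos : 0 < k := by omega
        obtain ⟨N, hN⟩ : ∃ N, t ≤ s + N * k := ⟨t, by nlinarith⟩
        have h1 : ∀ s', A (t + s' + d) = A (t + s') := by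
          intro s'
          have h2 := congrArg (fun σ => (F^[s'] σ) ⟨0, hn⟩) heq
          simp only [← Function.iterate_add_apply] at h2
          rw [hout, hout] at h2
          have ht'd : t' + s' = t + s' + d := by omega
          have ht'd2 : t' + s' + d = t + s' + d + d := by omega
          calc A (t + s' + d) = A (t' + s') := by rw [ht'd]
            _ = A (t + s') := by
              rw [show t' + s' = s' + t' from by omega, show t + s' = s' + t from by omega]
              exact h2.symm
        have h3 : A (s + N * k + d) = A (s + N * k) := by
          have : s + N * k = t + (s + N * k - t) := by omega
          rw [this]; exact h1 _
        calc A (s + d) = A (s + d + N * k) := (hperN N _).symm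
          _ = A (s + N * k + d) := by ring_nf
          _ = A (s + N * k) := h3
          _ = A s := hperN N s
      have := hleast d hdpos hA
      omega
    intro t t' ht ht' heq
    rcases le_total t t' with h | h
    · exact key t t' h ht ht' heq
    · exact (key t' t h ht' ht heq.symm).symm
  -- each N_i ≤ m^(n-1)
  have hNi : ∀ i : Fin m, ((Finset.range k).filter (fun j => A j = i)).card ≤ m ^ (n - 1) := by
    intro i
    have : ((Finset.range k).filter (fun j => A j = i)).card
        ≤ (Finset.univ : Finset (Fin (n - 1) → Fin m)).card := by
      apply Finset.card_le_card_of_injOn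
        (fun j => fun l : Fin (n - 1) => F^[j] σ₀ ⟨l.val + 1, by omega⟩)
      · intro j _; exact Finset.mem_univ _
      · intro j hj j' hj' htail
        simp only [Finset.mem_coe, Finset.mem_filter, Finset.mem_range] at hj hj'
        apply hinj j j' hj.1 hj'.1
        funext x
        rcases Nat.eq_zero_or_pos x.val with hx | hx
        · have hx0 : x = ⟨0, hn⟩ := by ext; exact hx
          rw [hx0, hout, hout, hj.2, hj'.2]
        · have hxlt : x.val - 1 < n - 1 := by omega
          have := congrFun htail ⟨x.val - 1, hxlt⟩
          simp only at this
          have hxe : x = ⟨x.val - 1 + 1, by omega⟩ := by ext; simp; omega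
          rw [hxe]; exact this
    simpa using this
  have hsup : (Finset.univ.sup fun i : Fin m =>
      ((Finset.range k).filter (fun j => A j = i)).card) ≤ m ^ (n - 1) :=
    Finset.sup_le fun i _ => hNi i
  have := (Nat.clog_le_iff_le_pow (by omega : 1 < m)).mpr hsup
  omega
end

section
/- Let m ≥ 2 and let A : ℕ → Fin m be purely periodic with least period k. Then there exists an m-ary n-stage machine with n = ⌈log_m N_max⌉ + 1 stages generating A: concretely, there exists a function F : Fin (m^n) → Fin (m^n) and a state sequence s : ℕ → Fin (m^n) with s(t+1) = F(s t), s(t) mod m = A t for all t, and s periodic with period k. -/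
theorem stmt_5 (m k : ℕ) (hm : 2 ≤ m) (hk : 0 < k) (A : ℕ → Fin m)
    (hper : ∀ t, A (t + k) = A t)
    (hleast : ∀ k', 0 < k' → (∀ t, A (t + k') = A t) → k ≤ k') :
    ∃ F : Fin (m ^ (Nat.clog m (Finset.univ.sup fun i : Fin m =>
            ((Finset.range k).filter (fun j => A j = i)).card) + 1)) →
          Fin (m ^ (Nat.clog m (Finset.univ.sup fun i : Fin m =>
            ((Finset.range k).filter (fun j => A j = i)).card) + 1)),
      ∃ s : ℕ → Fin (m ^ (Nat.clog m (Finset.univ.sup fun i : Fin m =>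
            ((Finset.range k).filter (fun j => A j = i)).card) + 1)),
        (∀ t, s (t + 1) = F (s t)) ∧
        (∀ t, (s t : ℕ) % m = (A t : ℕ)) ∧
        (∀ t, s (t + k) = s t) := by
  classical
  have hm1 : 1 < m := hm
  set Nmax := Finset.univ.sup fun i : Fin m =>
    ((Finset.range k).filter (fun j => A j = i)).card with hNmax
  set n := Nat.clog m Nmax + 1 with hn
  -- A depends only on t % k
  have hAmod : ∀ t, A (t % k) = A t := by
    intro t
    conv_rhs => rw [← Nat.mod_add_div t k]
    generalize t / k = q
    induction q with
    | zero => simp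
    | succ q ih => rw [Nat.mul_succ, ← Nat.add_assoc, hper]; exact ih
  -- the count function
  set c : ℕ → ℕ := fun t =>
    ((Finset.range (t % k)).filter (fun j => A j = A (t % k))).card with hc
  have hcNmax : ∀ t, c t < Nmax := by
    intro t
    have htk : t % k < k := Nat.mod_lt _ hk
    have hsub : (Finset.range (t % k)).filter (fun j => A j = A (t % k)) ⊂
        (Finset.range k).filter (fun j => A j = A (t % k)) := by
      constructor
      · exact Finset.filter_subset_filter _ (Finset.range_subset_range.2 htk.le)
      · intro hsub'
        have : t % k ∈ (Finset.range k).filter (fun j => A j = A (t % k)) := by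
          simp [htk]
        have := hsub' this
        simp at this
    calc c t < ((Finset.range k).filter (fun j => A j = A (t % k))).card :=
          Finset.card_lt_card hsub
      _ ≤ Nmax := by
          rw [hNmax]
          exact Finset.le_sup (f := fun i : Fin m =>
            ((Finset.range k).filter (fun j => A j = i)).card)
            (Finset.mem_univ (A (t % k)))
  have hpow : Nmax ≤ m ^ Nat.clog m Nmax := Nat.le_pow_clog hm1 _
  have hbound : ∀ t, c t * m + (A (t % k)).val < m ^ n := by
    intro t
    have h1 : c t * m + (A (t % k)).val < (c t + 1) * m := by
      have := (A (t % k)).isLt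
      calc c t * m + (A (t % k)).val < c t * m + m := by omega
        _ = (c t + 1) * m := by ring
    have h2 : c t + 1 ≤ m ^ Nat.clog m Nmax := le_trans (hcNmax t) hpow
    calc c t * m + (A (t % k)).val < (c t + 1) * m := h1
      _ ≤ m ^ Nat.clog m Nmax * m := Nat.mul_le_mul_right _ h2
      _ = m ^ n := by rw [hn, pow_succ]
  have hmodm : ∀ a x, x < m → (a * m + x) % m = x := by
    intro a x hx
    rw [mul_comm, Nat.mul_add_mod, Nat.mod_eq_of_lt hx]
  set sFn : ℕ → Fin (m ^ n) := fun t => ⟨c t * m + (A (t % k)).val, hbound t⟩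
    with hsFn
  -- sFn depends only on t % k
  have hmodeq : ∀ a b, a % k = b % k → sFn a = sFn b := by
    intro a b h
    simp only [hsFn, hc, h]
  -- injectivity on [0, k)
  have hinj : ∀ a b, a < k → b < k → sFn a = sFn b → a = b := by
    intro a b ha hb hab
    have hval : c a * m + (A (a % k)).val = c b * m + (A (b % k)).val :=
      congrArg Fin.val hab
    have ha' : a % k = a := Nat.mod_eq_of_lt ha
    have hb' : b % k = b := Nat.mod_eq_of_lt hb
    rw [ha', hb'] at hval
    have hAval : (A a).val = (A b).val := by
      have := congrArg (· % m) hval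
      simpa [hmodm _ _ (A a).isLt, hmodm _ _ (A b).isLt] using this
    have hAab : A a = A b := Fin.ext hAval
    have hcab : c a = c b := by
      have h1 : c a * m = c b * m := by omega
      exact Nat.eq_of_mul_eq_mul_right (by omega) h1
    by_contra hne
    -- wlog a < b
    have key : ∀ x y, x < y → y < k → A x = A y → c x < c y := by
      intro x y hxy hyk hAxy
      have hx' : x % k = x := Nat.mod_eq_of_lt (lt_trans hxy hyk)
      have hy' : y % k = y := Nat.mod_eq_of_lt hyk
      have hsub : insert x ((Finset.range x).filter (fun j => A j = A x)) ⊆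
          (Finset.range y).filter (fun j => A j = A y) := by
        intro z hz
        rcases Finset.mem_insert.1 hz with rfl | hz'
        · simp [hxy, hAxy]
        · simp only [Finset.mem_filter, Finset.mem_range] at hz' ⊢
          exact ⟨lt_trans hz'.1 hxy, hz'.2.trans hAxy⟩
      have hnotmem : x ∉ (Finset.range x).filter (fun j => A j = A x) := by
        simp
      have := Finset.card_le_card hsub
      rw [Finset.card_insert_of_notMem hnotmem] at this
      simp only [hc, hx', hy']
      omega
    rcases lt_or_gt_of_ne hne with h | h
    · have := key a b h hb hAab; omega
    · have := key b a h ha hAab.symm; omega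
  -- define F
  set F : Fin (m ^ n) → Fin (m ^ n) := fun x =>
    if h : ∃ t, t < k ∧ sFn t = x then sFn (h.choose + 1) else x with hF
  refine ⟨F, sFn, ?_, ?_, ?_⟩
  · intro t
    have htk : t % k < k := Nat.mod_lt _ hk
    have hex : ∃ t', t' < k ∧ sFn t' = sFn t :=
      ⟨t % k, htk, hmodeq _ _ (Nat.mod_mod_of_dvd t dvd_rfl)⟩
    have hFeq : F (sFn t) = sFn (hex.choose + 1) := by
      simp only [hF]
      rw [dif_pos hex]
    obtain ⟨ht0, hs0⟩ := hex.choose_spec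
    have ht0eq : hex.choose = t % k :=
      hinj _ _ ht0 htk (hs0.trans (hmodeq _ _ (Nat.mod_mod_of_dvd t dvd_rfl)).symm)
    rw [hFeq, ht0eq]
    refine (hmodeq _ _ ?_).symm
    exact (Nat.mod_modEq t k).add_right 1
  · intro t
    show (c t * m + (A (t % k)).val) % m = (A t).val
    rw [hmodm _ _ (A (t % k)).isLt, hAmod]
  · intro t
    exact hmodeq _ _ (Nat.add_mod_right t k)
end

section
/- Let A : ℕ → Bool (equivalently Fin 2) be purely periodic with least period k, let p ≥ 1, assume p divides k, and let m = 2^p. Define the m-ary encoding A' : ℕ → Fin m of A by A'(j) = Σ_{t=0}^{p−1} A(jp+t)·2^{p−1−t}. Then A' is periodic with period k/p, and any binary n-stage machine generating A with degree of parallelization p (outputting p fresh bits of A per clock cycle from p designated stages) satisfies n ≥ ⌈log_2 N_max⌉ + p, where N_max = max_{i ∈ Fin m} N_i and N_i is the number of occurrences of value i in one period of A'. -/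
lemma sumbits_lt (p : ℕ) (f : ℕ → Bool) :
    (∑ t ∈ Finset.range p, (f t).toNat * 2 ^ t) < 2 ^ p := by
  induction p with
  | zero => simp
  | succ p ih =>
    rw [Finset.sum_range_succ]
    have h1 : (f p).toNat ≤ 1 := Bool.toNat_le _
    have h2 : (f p).toNat * 2 ^ p ≤ 1 * 2 ^ p := Nat.mul_le_mul_right _ h1
    have h3 : 2 ^ (p + 1) = 2 ^ p + 2 ^ p := by ring
    omega

lemma bits_inj (p : ℕ) (f g : ℕ → Bool)
    (h : (∑ t ∈ Finset.range p, (f t).toNat * 2 ^ t)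
       = (∑ t ∈ Finset.range p, (g t).toNat * 2 ^ t)) :
    ∀ t < p, f t = g t := by
  induction p with
  | zero => omega
  | succ p ih =>
    rw [Finset.sum_range_succ, Finset.sum_range_succ] at h
    have hf := sumbits_lt p f
    have hg := sumbits_lt p g
    have heq : f p = g p ∧
        (∑ t ∈ Finset.range p, (f t).toNat * 2 ^ t)
        = (∑ t ∈ Finset.range p, (g t).toNat * 2 ^ t) := by
      cases hfp : f p <;> cases hgp : g p <;> rw [hfp, hgp] at h <;> simp at h ⊢ <;> omega
    intro t ht
    rcases Nat.lt_or_ge t p with h' | h'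
    · exact ih heq.2 t h'
    · have : t = p := by omega
      rw [this]; exact heq.1

theorem stmt_6 (p k n : ℕ) (hp : 1 ≤ p) (hk : 0 < k) (hpk : p ∣ k)
    (A : ℕ → Bool)
    (hper : ∀ t, A (t + k) = A t)
    (hleast : ∀ k', 0 < k' → (∀ t, A (t + k') = A t) → k ≤ k')
    (A' : ℕ → ℕ)
    (hA' : ∀ j, A' j = ∑ t : Fin p, (if A (j * p + (t : ℕ)) then 2 ^ (p - 1 - (t : ℕ)) else 0))
    (F : (Fin n → Bool) → (Fin n → Bool)) (σ₀ : Fin n → Bool)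
    (hpn : p ≤ n)
    (hout : ∀ t, ∀ r : Fin p, (F^[t] σ₀) ⟨(r : ℕ), lt_of_lt_of_le r.isLt hpn⟩ = A (t * p + (r : ℕ))) :
    (∀ j, A' (j + k / p) = A' j) ∧
    n ≥ Nat.clog 2 ((Finset.range (2 ^ p)).sup fun i =>
        ((Finset.range (k / p)).filter (fun j => A' j = i)).card) + p := by
  have hp0 : 0 < p := hp
  have hkp : k / p * p = k := Nat.div_mul_cancel hpk
  have hperM : ∀ M t, A (t + M * k) = A t := by
    intro M
    induction M with
    | zero => simp
    | succ M ih =>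
      intro t
      rw [Nat.succ_mul, ← Nat.add_assoc, hper, ih]
  constructor
  · intro j
    rw [hA', hA']
    apply Finset.sum_congr rfl
    intro t _
    have hidx : (j + k / p) * p + (t : ℕ) = j * p + (t : ℕ) + k := by
      rw [Nat.add_mul, hkp]; ring
    rw [hidx, hper]
  -- rewrite A' in "little-endian bit sum" form
  have hA'2 : ∀ j, A' j = ∑ t ∈ Finset.range p,
      (A (j * p + (p - 1 - t))).toNat * 2 ^ t := by
    intro j
    rw [hA', Fin.sum_univ_eq_sum_range (fun t => if A (j * p + t) then 2 ^ (p - 1 - t) else 0) p,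
      ← Finset.sum_range_reflect]
    apply Finset.sum_congr rfl
    intro t ht
    simp only [Finset.mem_range] at ht
    have hpt : p - 1 - (p - 1 - t) = t := by omega
    rw [hpt]
    cases A (j * p + (p - 1 - t)) <;> simp
  -- same A' value determines low bits
  have hbits : ∀ j j', A' j = A' j' → ∀ r < p, A (j * p + r) = A (j' * p + r) := by
    intro j j' hjj r hr
    rw [hA'2, hA'2] at hjj
    have := bits_inj p _ _ hjj (p - 1 - r) (by omega)
    have hr' : p - 1 - (p - 1 - r) = r := by omega
    rwa [hr'] at this
  -- distinct states along one period
  have hstate : ∀ j j', j < j' → j' < k / p → F^[j] σ₀ ≠ F^[j'] σ₀ := by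
    intro j j' hjj' hj' heq
    obtain ⟨d, rfl⟩ : ∃ d, j' = j + d := ⟨j' - j, by omega⟩
    have hd0 : 0 < d := by omega
    have hiter : ∀ a, F^[j + d + a] σ₀ = F^[j + a] σ₀ := by
      intro a
      have h1 := Function.iterate_add_apply F a (j + d) σ₀
      have h2 := Function.iterate_add_apply F a j σ₀
      rw [show j + d + a = a + (j + d) from by ring, show j + a = a + j from by ring,
        h1, h2, heq]
    have hshift : ∀ x, j * p ≤ x → A (x + d * p) = A x := by
      intro x hx
      obtain ⟨y, hy⟩ := Nat.exists_eq_add_of_le hx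
      obtain ⟨a, r, hr, hy2⟩ : ∃ a r, r < p ∧ y = a * p + r :=
        ⟨y / p, y % p, Nat.mod_lt _ hp0, (Nat.div_add_mod' y p).symm⟩
      have hx' : x = (j + a) * p + r := by rw [hy, hy2]; ring
      have hx'' : x + d * p = (j + a + d) * p + r := by
        rw [hx']; ring
      have e1 := hout (j + a + d) ⟨r, hr⟩
      have e2 := hout (j + a) ⟨r, hr⟩
      simp only at e1 e2
      rw [hx'', hx', ← e1, ← e2,
        show j + a + d = j + d + a from by ring, hiter]
    have hperd : ∀ t, A (t + d * p) = A t := by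
      intro t
      have h1 : A (t + j * p * k) = A t := hperM (j * p) t
      have h2 : A (t + d * p + j * p * k) = A (t + d * p) := hperM (j * p) (t + d * p)
      have hM : j * p ≤ t + j * p * k := by
        have : j * p * 1 ≤ j * p * k := Nat.mul_le_mul_left _ hk
        omega
      have h3 := hshift (t + j * p * k) hM
      rw [show t + j * p * k + d * p = t + d * p + j * p * k from by ring] at h3
      rw [← h2, h3, h1]
    have hkd : k ≤ d * p := hleast (d * p) (by positivity) hperd
    have h5 : d * p + p ≤ k / p * p := by
      have hdk : d + 1 ≤ k / p := by omega
      calc d * p + p = (d + 1) * p := by ring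
        _ ≤ k / p * p := Nat.mul_le_mul_right p hdk
    rw [hkp] at h5
    linarith
  -- each fiber has at most 2^(n-p) elements
  have hcard : ∀ i, ((Finset.range (k / p)).filter (fun j => A' j = i)).card ≤ 2 ^ (n - p) := by
    intro i
    have hle : ((Finset.range (k / p)).filter (fun j => A' j = i)).card
        ≤ (Finset.univ : Finset (Fin (n - p) → Bool)).card := by
      apply Finset.card_le_card_of_injOn
        (fun j => fun x : Fin (n - p) => F^[j] σ₀ ⟨p + (x : ℕ), by omega⟩)
      · intro j _; exact Finset.mem_univ _
      · intro j hj j' hj' heqf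
        simp only [Finset.coe_filter, Set.mem_setOf_eq, Finset.mem_range] at hj hj'
        by_contra hne
        have hstates : F^[j] σ₀ = F^[j'] σ₀ := by
          funext x
          rcases Nat.lt_or_ge (x : ℕ) p with hx | hx
          · have e1 := hout j ⟨(x : ℕ), hx⟩
            have e2 := hout j' ⟨(x : ℕ), hx⟩
            simp only at e1 e2
            have hxx : (⟨(x : ℕ), lt_of_lt_of_le hx hpn⟩ : Fin n) = x := by
              apply Fin.ext; rfl
            rw [hxx] at e1 e2
            rw [e1, e2]
            exact hbits j j' (hj.2.trans hj'.2.symm) (x : ℕ) hx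
          · have hxn : (x : ℕ) - p < n - p := by omega
            have := congrFun heqf ⟨(x : ℕ) - p, hxn⟩
            simp only at this
            have hxx : (⟨p + ((x : ℕ) - p), by omega⟩ : Fin n) = x := by
              apply Fin.ext; simp; omega
            rwa [hxx] at this
        rcases Nat.lt_or_ge j j' with h' | h'
        · exact hstate j j' h' hj'.1 hstates
        · exact hstate j' j (by omega) hj.1 hstates.symm
    simpa [Finset.card_univ] using hle
  have hsup : ((Finset.range (2 ^ p)).sup fun i =>
      ((Finset.range (k / p)).filter (fun j => A' j = i)).card) ≤ 2 ^ (n - p) := by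
    apply Finset.sup_le
    intro i _
    exact hcard i
  have hclog := (Nat.clog_le_iff_le_pow (by norm_num : 1 < 2)).mpr hsup
  omega
end

section
/- Let A : ℕ → Fin 2 be purely periodic with least period k, p ≥ 1 with p ∣ k, and m = 2^p. If there exists an m-ary machine with n' stages generating the m-ary encoding A' of A one m-ary digit per cycle, then there exists a binary machine with p·n' stages generating A with degree of parallelization p. Combined with Theorem 1, A can be generated p bits per cycle by a binary machine with p·(⌈log_m N_max⌉ + 1) stages, where N_max is the maximal occurrence count in one period of A'. -/
lemma aux_sum_two_pow (n : ℕ) : ∑ i ∈ Finset.range n, 2^i = 2^n - 1 := by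
  induction n with
  | zero => simp
  | succ n ih =>
    rw [Finset.sum_range_succ, ih, pow_succ]
    have : 0 < 2^n := Nat.pow_pos (by norm_num)
    omega

lemma aux_lt (p : ℕ) (a : ℕ → ℕ) (ha : ∀ i, a i ≤ 1) :
    ∑ i ∈ Finset.range p, a i * 2^(p-1-i) < 2^p := by
  have h1 : ∑ i ∈ Finset.range p, a i * 2^(p-1-i) ≤ ∑ i ∈ Finset.range p, 1 * 2^(p-1-i) :=
    Finset.sum_le_sum (fun i _ => Nat.mul_le_mul_right _ (ha i))
  simp only [one_mul] at h1
  have h2 : ∑ i ∈ Finset.range p, 2^(p-1-i) = ∑ i ∈ Finset.range p, 2^i :=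
    Finset.sum_range_reflect (fun i => 2^i) p
  rw [h2, aux_sum_two_pow] at h1
  have : 0 < 2^p := Nat.pow_pos (by norm_num)
  omega

lemma aux_bit : ∀ (n : ℕ) (b : ℕ → ℕ), (∀ i, b i ≤ 1) → ∀ j < n,
    (∑ i ∈ Finset.range n, b i * 2^i) / 2^j % 2 = b j := by
  intro n
  induction n with
  | zero => intro b _ j hj; omega
  | succ n ih =>
    intro b hb j hj
    rw [Finset.sum_range_succ']
    have hrw : ∑ i ∈ Finset.range n, b (i+1) * 2^(i+1)
        = (∑ i ∈ Finset.range n, b (i+1) * 2^i) * 2 := by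
      rw [Finset.sum_mul]
      exact Finset.sum_congr rfl fun i _ => by ring
    rw [hrw]
    set w := ∑ i ∈ Finset.range n, b (i+1) * 2^i with hw
    have hb0 := hb 0
    cases j with
    | zero =>
      simp only [pow_zero, Nat.div_one, mul_one]
      omega
    | succ j =>
      have h2 : (w * 2 + b 0 * 2^0) / 2^(j+1) = w / 2^j := by
        have e : w * 2 + b 0 * 2^0 = b 0 + w * 2 := by ring
        have hb02 : b 0 / 2 = 0 := by omega
        rw [e, show (2:ℕ)^(j+1) = 2 * 2^j by ring, ← Nat.div_div_eq_div_mul,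
          Nat.add_mul_div_right _ _ (by norm_num : (0:ℕ) < 2), hb02, zero_add]
      rw [h2]
      exact ih (fun i => b (i+1)) (fun i => hb _) j (by omega)

lemma aux_expand : ∀ (n v : ℕ), v < 2^n → ∑ i ∈ Finset.range n, v / 2^i % 2 * 2^i = v := by
  intro n
  induction n with
  | zero => intro v hv; interval_cases v; simp
  | succ n ih =>
    intro v hv
    rw [Finset.sum_range_succ']
    have h1 : ∀ i : ℕ, v / 2^(i+1) = (v/2) / 2^i := by
      intro i
      rw [show (2:ℕ)^(i+1) = 2 * 2^i by ring, ← Nat.div_div_eq_div_mul]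
    have hrw : ∑ i ∈ Finset.range n, v / 2^(i+1) % 2 * 2^(i+1)
        = (∑ i ∈ Finset.range n, (v/2) / 2^i % 2 * 2^i) * 2 := by
      rw [Finset.sum_mul]
      exact Finset.sum_congr rfl fun i _ => by rw [h1 i]; ring
    rw [hrw, ih (v/2) (by rw [pow_succ] at hv; omega)]
    simp only [pow_zero, Nat.div_one, mul_one]
    omega

lemma aux_reflected (p : ℕ) (a : ℕ → ℕ) (ha : ∀ i, a i ≤ 1) (r : ℕ) (hr : r < p) :
    (∑ i ∈ Finset.range p, a i * 2^(p-1-i)) / 2^(p-1-r) % 2 = a r := by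
  have hs : ∑ i ∈ Finset.range p, a i * 2^(p-1-i) = ∑ i ∈ Finset.range p, a (p-1-i) * 2^i := by
    rw [← Finset.sum_range_reflect (fun i => a (p-1-i) * 2^i) p]
    refine Finset.sum_congr rfl fun i hi => ?_
    rw [Finset.mem_range] at hi
    congr 2 <;> omega
  rw [hs, aux_bit p (fun i => a (p-1-i)) (fun i => ha _) (p-1-r) (by omega)]
  congr 1
  omega

lemma aux_expand_reflect (p v : ℕ) (hv : v < 2^p) :
    ∑ i ∈ Finset.range p, v / 2^(p-1-i) % 2 * 2^(p-1-i) = v := by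
  have h : ∑ j ∈ Finset.range p, v/2^(p-1-j)%2 * 2^(p-1-j)
      = ∑ j ∈ Finset.range p, v/2^j%2*2^j :=
    Finset.sum_range_reflect (fun i => v/2^i%2*2^i) p
  rw [h]
  exact aux_expand p v hv

lemma aux_idx_lt {p n s r : ℕ} (hs : s < n) (hr : r < p) : s * p + r < p * n := by
  calc s * p + r < s * p + p := by omega
    _ = (s+1) * p := by ring
    _ ≤ n * p := Nat.mul_le_mul_right p hs
    _ = p * n := mul_comm n p

def auxEnc (p n : ℕ) (σ : Fin n → Fin (2^p)) : Fin (p*n) → Fin 2 :=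
  fun q => ⟨(σ ⟨(q:ℕ)/p, Nat.div_lt_of_lt_mul q.isLt⟩ : ℕ) / 2^(p-1-(q:ℕ)%p) % 2,
    Nat.mod_lt _ (by norm_num)⟩

def auxDec (p n : ℕ) (τ : Fin (p*n) → Fin 2) : Fin n → Fin (2^p) :=
  fun s => ⟨∑ i ∈ Finset.range p,
      (if h : (s:ℕ)*p + i < p*n then ((τ ⟨(s:ℕ)*p+i, h⟩ : Fin 2) : ℕ) else 0) * 2^(p-1-i),
    aux_lt p _ (fun i => by
      split
      · exact Nat.le_of_lt_succ (Fin.is_lt _)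
      · exact Nat.zero_le 1)⟩

lemma auxDecEnc (p n : ℕ) (hp : 0 < p) (σ : Fin n → Fin (2^p)) :
    auxDec p n (auxEnc p n σ) = σ := by
  funext s
  refine Fin.ext ?_
  show (∑ i ∈ Finset.range p,
      (if h : (s:ℕ)*p + i < p*n then ((auxEnc p n σ ⟨(s:ℕ)*p+i, h⟩ : Fin 2) : ℕ) else 0)
        * 2^(p-1-i)) = (σ s : ℕ)
  have hterm : ∀ i ∈ Finset.range p,
      (if h : (s:ℕ)*p + i < p*n then ((auxEnc p n σ ⟨(s:ℕ)*p+i, h⟩ : Fin 2) : ℕ) else 0)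
        * 2^(p-1-i) = ((σ s : ℕ) / 2^(p-1-i) % 2) * 2^(p-1-i) := by
    intro i hi
    rw [Finset.mem_range] at hi
    have hlt : (s:ℕ)*p + i < p*n := aux_idx_lt s.isLt hi
    rw [dif_pos hlt]
    have hd : ((s:ℕ)*p + i)/p = (s:ℕ) := by
      rw [add_comm, Nat.add_mul_div_right _ _ hp, Nat.div_eq_of_lt hi, zero_add]
    have hm : ((s:ℕ)*p + i)%p = i := by
      rw [add_comm, Nat.add_mul_mod_self_right, Nat.mod_eq_of_lt hi]
    simp only [auxEnc, Fin.val_mk, hd, hm, Fin.eta]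
  rw [Finset.sum_congr rfl hterm]
  exact aux_expand_reflect p _ (Fin.is_lt _)

def auxF (p q : ℕ) : ℕ := p * (q / p) + (p - 1 - q % p)

lemma auxF_lt {p n q : ℕ} (hp : 0 < p) (hq : q < p * n) : auxF p q < p * n := by
  have h1 : q / p < n := Nat.div_lt_of_lt_mul hq
  have h2 : q % p < p := Nat.mod_lt _ hp
  unfold auxF
  calc p * (q/p) + (p - 1 - q % p) < p * (q/p) + p := by omega
    _ = p * (q/p + 1) := by ring
    _ ≤ p * n := Nat.mul_le_mul_left _ (by omega)

lemma auxF_invol {p : ℕ} (hp : 0 < p) (q : ℕ) : auxF p (auxF p q) = q := by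
  have h2 : q % p < p := Nat.mod_lt _ hp
  have e1 : auxF p q % p = p - 1 - q % p := by
    unfold auxF
    rw [Nat.mul_add_mod, Nat.mod_eq_of_lt (by omega)]
  have e2 : auxF p q / p = q / p := by
    unfold auxF
    have h3 : (p - 1 - q % p) / p = 0 := Nat.div_eq_of_lt (by omega)
    rw [Nat.mul_add_div hp, h3, add_zero]
  conv_lhs => rw [auxF]
  rw [e1, e2]
  have := Nat.div_add_mod q p
  omega

lemma auxF_small {p q : ℕ} (hq : q < p) : auxF p q = p - 1 - q := by
  unfold auxF
  rw [Nat.div_eq_of_lt hq, Nat.mod_eq_of_lt hq, Nat.mul_zero, zero_add]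

def auxC (A' : ℕ → ℕ) (j : ℕ) : ℕ := ((Finset.range j).filter (fun i => A' i = A' j)).card

def auxCode (p : ℕ) (A' : ℕ → ℕ) (j : ℕ) : ℕ := A' j + 2^p * auxC A' j

lemma auxCode_bit (p : ℕ) (A' : ℕ → ℕ) (j r : ℕ) (hr : r < p) :
    auxCode p A' j / 2^(p-1-r) % 2 = A' j / 2^(p-1-r) % 2 := by
  unfold auxCode
  set i := p - 1 - r with hi
  have h1 : 2^p * auxC A' j = (2^(p-i-1) * auxC A' j * 2) * 2^i := by
    have hip : p = i + (p - i - 1) + 1 := by omega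
    calc 2^p * auxC A' j = 2^(i + (p-i-1) + 1) * auxC A' j := by rw [← hip]
      _ = (2^(p-i-1) * auxC A' j * 2) * 2^i := by rw [pow_add, pow_add, pow_one]; ring
  rw [h1, Nat.add_mul_div_right _ _ (pow_pos (by norm_num : (0:ℕ) < 2) i),
    Nat.add_mul_mod_self_right]

lemma auxCode_mod (p : ℕ) (A' : ℕ → ℕ) (j : ℕ) (h : A' j < 2^p) :
    auxCode p A' j % 2^p = A' j := by
  unfold auxCode
  rw [Nat.add_mul_mod_self_left, Nat.mod_eq_of_lt h]

lemma auxC_lt (A' : ℕ → ℕ) {a b : ℕ} (hab : a < b) (hv : A' a = A' b) :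
    auxC A' a < auxC A' b := by
  unfold auxC
  have hsubset : (Finset.range a).filter (fun i => A' i = A' a)
      ⊆ (Finset.range b).filter (fun i => A' i = A' b) := by
    intro x hx
    simp only [Finset.mem_filter, Finset.mem_range] at hx ⊢
    exact ⟨by omega, by rw [hx.2, hv]⟩
  have hmem : a ∈ (Finset.range b).filter (fun i => A' i = A' b) := by
    simp only [Finset.mem_filter, Finset.mem_range]
    exact ⟨hab, hv⟩
  have hnmem : a ∉ (Finset.range a).filter (fun i => A' i = A' a) := by
    intro hx
    simp only [Finset.mem_filter, Finset.mem_range] at hx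
    exact lt_irrefl a hx.1
  exact Finset.card_lt_card ((Finset.ssubset_iff_of_subset hsubset).mpr ⟨a, hmem, hnmem⟩)

lemma auxMachine {α : Type*} (K : ℕ) (hK : 0 < K) (S : ℕ → α)
    (hmod : ∀ t, S (t % K) = S t)
    (hinj : ∀ j1, j1 < K → ∀ j2, j2 < K → S j1 = S j2 → j1 = j2) :
    ∃ G : α → α, ∀ t, G^[t] (S 0) = S t := by
  classical
  refine ⟨fun τ => if h : ∃ j, j < K ∧ S j = τ then S (h.choose + 1) else τ, ?_⟩
  intro t
  induction t with
  | zero => simp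
  | succ t ih =>
    rw [Function.iterate_succ_apply', ih]
    have hex : ∃ j, j < K ∧ S j = S t := ⟨t % K, Nat.mod_lt _ hK, hmod t⟩
    simp only [dif_pos hex]
    have hspec := hex.choose_spec
    have hch : hex.choose = t % K :=
      hinj _ hspec.1 _ (Nat.mod_lt _ hK) (by rw [hspec.2, hmod])
    rw [hch, ← hmod (t % K + 1), Nat.mod_add_mod, hmod]

theorem stmt_12 (p k n' : ℕ) (hp : 1 ≤ p) (hn' : 1 ≤ n') (hk : 0 < k) (hpk : p ∣ k)
    (A : ℕ → Fin 2)
    (hper : ∀ t, A (t + k) = A t)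
    (hleast : ∀ k', 0 < k' → (∀ t, A (t + k') = A t) → k ≤ k')
    (A' : ℕ → ℕ)
    (hA' : ∀ j, A' j = ∑ t : Fin p, (A (j * p + (t : ℕ)) : ℕ) * 2 ^ (p - 1 - (t : ℕ)))
    (F : (Fin n' → Fin (2 ^ p)) → (Fin n' → Fin (2 ^ p))) (σ₀ : Fin n' → Fin (2 ^ p))
    (hout : ∀ t, ((F^[t] σ₀) ⟨0, hn'⟩ : ℕ) = A' t) :
    (∃ G : (Fin (p * n') → Fin 2) → (Fin (p * n') → Fin 2), ∃ τ₀ : Fin (p * n') → Fin 2,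
      ∀ t, ∀ r : Fin p,
        (G^[t] τ₀) ⟨(r : ℕ), lt_of_lt_of_le r.isLt (Nat.le_mul_of_pos_right p hn')⟩ =
          A (t * p + (r : ℕ))) ∧
    (∃ G : (Fin (p * (Nat.clog (2 ^ p) ((Finset.range (2 ^ p)).sup fun i =>
            ((Finset.range (k / p)).filter (fun j => A' j = i)).card) + 1)) → Fin 2) →
          (Fin (p * (Nat.clog (2 ^ p) ((Finset.range (2 ^ p)).sup fun i =>
            ((Finset.range (k / p)).filter (fun j => A' j = i)).card) + 1)) → Fin 2),
      ∃ τ₀, ∀ t, ∀ r : Fin p, ∀ (hr : (r : ℕ) < p * (Nat.clog (2 ^ p) ((Finset.range (2 ^ p)).sup fun i =>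
            ((Finset.range (k / p)).filter (fun j => A' j = i)).card) + 1)),
        (G^[t] τ₀) ⟨(r : ℕ), hr⟩ = A (t * p + (r : ℕ))) := by
  have hp0 : 0 < p := hp
  have hAle : ∀ x : ℕ, ((A x : Fin 2) : ℕ) ≤ 1 := fun x => Nat.le_of_lt_succ (Fin.is_lt _)
  have hA'range : ∀ j, A' j = ∑ i ∈ Finset.range p, ((A (j * p + i) : Fin 2) : ℕ) * 2 ^ (p - 1 - i) := by
    intro j
    rw [hA' j]
    exact Fin.sum_univ_eq_sum_range (fun i => ((A (j * p + i) : Fin 2) : ℕ) * 2 ^ (p - 1 - i)) p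
  have hA'lt : ∀ j, A' j < 2 ^ p := by
    intro j
    rw [hA'range j]
    exact aux_lt p _ (fun i => hAle _)
  have hA'bit : ∀ j r : ℕ, r < p → A' j / 2 ^ (p - 1 - r) % 2 = ((A (j * p + r) : Fin 2) : ℕ) := by
    intro j r hr
    rw [hA'range j]
    exact aux_reflected p (fun i => ((A (j * p + i) : Fin 2) : ℕ)) (fun i => hAle _) r hr
  constructor
  · -- Part 1 : transport the machine through the binary encoding
    refine ⟨fun τ => auxEnc p n' (F (auxDec p n' τ)), auxEnc p n' σ₀, ?_⟩
    have hiter : ∀ t,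
        (fun τ => auxEnc p n' (F (auxDec p n' τ)))^[t] (auxEnc p n' σ₀)
          = auxEnc p n' (F^[t] σ₀) := by
      intro t
      induction t with
      | zero => rfl
      | succ t ih =>
        rw [Function.iterate_succ_apply', ih]
        show auxEnc p n' (F (auxDec p n' (auxEnc p n' (F^[t] σ₀)))) = _
        rw [auxDecEnc p n' hp0, ← Function.iterate_succ_apply' F t σ₀]
    intro t r
    rw [hiter]
    refine Fin.ext ?_
    show ((F^[t] σ₀) ⟨(r : ℕ) / p, _⟩ : ℕ) / 2 ^ (p - 1 - (r : ℕ) % p) % 2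
        = ((A (t * p + (r : ℕ)) : Fin 2) : ℕ)
    have h0 : (r : ℕ) / p = 0 := Nat.div_eq_of_lt r.isLt
    have hm : (r : ℕ) % p = (r : ℕ) := Nat.mod_eq_of_lt r.isLt
    have hidx : (⟨(r : ℕ) / p, Nat.div_lt_of_lt_mul
        (lt_of_lt_of_le r.isLt (Nat.le_mul_of_pos_right p hn'))⟩ : Fin n') = ⟨0, hn'⟩ :=
      Fin.ext h0
    rw [hidx, hm, hout t]
    exact hA'bit t (r : ℕ) r.isLt
  · -- Part 2 : direct construction using the occurrence-count encoding
    set K := k / p with hKdef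
    set N := (Finset.range (2 ^ p)).sup
      (fun i => ((Finset.range K).filter (fun j => A' j = i)).card) with hNdef
    set n2 := Nat.clog (2 ^ p) N + 1 with hn2def
    have hK : 0 < K := Nat.div_pos (Nat.le_of_dvd hk hpk) hp0
    have hkK : K * p = k := Nat.div_mul_cancel hpk
    have hAmul : ∀ c x : ℕ, A (x + c * k) = A x := by
      intro c
      induction c with
      | zero => simp
      | succ c ih =>
        intro x
        have e : x + (c + 1) * k = (x + c * k) + k := by ring
        rw [e, hper, ih]
    -- bound on the occurrence count
    have hcN : ∀ j, j < K → auxC A' j < N := by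
      intro j hj
      have h1 : auxC A' j < ((Finset.range K).filter (fun i => A' i = A' j)).card := by
        unfold auxC
        have hsubset : (Finset.range j).filter (fun i => A' i = A' j)
            ⊆ (Finset.range K).filter (fun i => A' i = A' j) :=
          Finset.filter_subset_filter _ (Finset.range_subset_range.mpr hj.le)
        have hmem : j ∈ (Finset.range K).filter (fun i => A' i = A' j) := by
          exact Finset.mem_filter.mpr ⟨Finset.mem_range.mpr hj, rfl⟩
        have hnmem : j ∉ (Finset.range j).filter (fun i => A' i = A' j) := by
          intro hx
          simp only [Finset.mem_filter, Finset.mem_range] at hx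
          exact lt_irrefl j hx.1
        exact Finset.card_lt_card ((Finset.ssubset_iff_of_subset hsubset).mpr ⟨j, hmem, hnmem⟩)
      have h2 : ((Finset.range K).filter (fun i => A' i = A' j)).card ≤ N := by
        rw [hNdef]
        exact Finset.le_sup (f := fun i => ((Finset.range K).filter (fun j' => A' j' = i)).card)
          (Finset.mem_range.mpr (hA'lt j))
      omega
    have hm1 : 1 < 2 ^ p := Nat.one_lt_two_pow_iff.mpr (by omega)
    have hcpow : ∀ j, j < K → auxC A' j < (2 ^ p) ^ Nat.clog (2 ^ p) N := fun j hj =>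
      lt_of_lt_of_le (hcN j hj) (Nat.le_pow_clog hm1 N)
    have hpowM : 2 ^ (p * n2) = 2 ^ p * (2 ^ p) ^ Nat.clog (2 ^ p) N := by
      rw [pow_mul, hn2def, pow_succ]
      ring
    have hcodelt : ∀ j, j < K → auxCode p A' j < 2 ^ (p * n2) := by
      intro j hj
      have h1 := hA'lt j
      have h2 := hcpow j hj
      have e1 : 2 ^ p * (auxC A' j + 1) ≤ 2 ^ p * (2 ^ p) ^ Nat.clog (2 ^ p) N :=
        Nat.mul_le_mul_left _ (by omega)
      have e2 : auxCode p A' j < 2 ^ p * (auxC A' j + 1) := by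
        unfold auxCode
        rw [Nat.mul_add, mul_one]
        omega
      omega
    have hcodeinj : ∀ j1, j1 < K → ∀ j2, j2 < K → auxCode p A' j1 = auxCode p A' j2 → j1 = j2 := by
      intro j1 h1 j2 h2 he
      have hv : A' j1 = A' j2 := by
        have e1 := auxCode_mod p A' j1 (hA'lt j1)
        have e2 := auxCode_mod p A' j2 (hA'lt j2)
        rw [he] at e1
        omega
      have hcc : auxC A' j1 = auxC A' j2 := by
        have hp2 : 0 < 2 ^ p := by positivity
        have e : 2 ^ p * auxC A' j1 = 2 ^ p * auxC A' j2 := by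
          unfold auxCode at he
          omega
        exact Nat.eq_of_mul_eq_mul_left hp2 e
      rcases lt_trichotomy j1 j2 with h | h | h
      · exact absurd hcc (Nat.ne_of_lt (auxC_lt A' h hv))
      · exact h
      · exact absurd hcc.symm (Nat.ne_of_lt (auxC_lt A' h hv.symm))
    -- the state sequence
    set S : ℕ → (Fin (p * n2) → Fin 2) := fun t q =>
      ⟨auxCode p A' (t % K) / 2 ^ auxF p (q : ℕ) % 2, Nat.mod_lt _ (by norm_num)⟩ with hSdef
    have hmod : ∀ t, S (t % K) = S t := by
      intro t
      funext q
      simp only [hSdef]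
      rw [Nat.mod_mod_of_dvd t dvd_rfl]
    have hinj : ∀ j1, j1 < K → ∀ j2, j2 < K → S j1 = S j2 → j1 = j2 := by
      intro j1 h1 j2 h2 hS
      have hb1 : j1 % K = j1 := Nat.mod_eq_of_lt h1
      have hb2 : j2 % K = j2 := Nat.mod_eq_of_lt h2
      have hbits : ∀ i, i < p * n2 →
          auxCode p A' j1 / 2 ^ i % 2 = auxCode p A' j2 / 2 ^ i % 2 := by
        intro i hi
        have hq := congrFun hS ⟨auxF p i, auxF_lt hp0 hi⟩
        have hqv := congrArg Fin.val hq
        simp only [hSdef, Fin.val_mk] at hqv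
        rw [hb1, hb2, auxF_invol hp0 i] at hqv
        exact hqv
      refine hcodeinj j1 h1 j2 h2 ?_
      rw [← aux_expand (p * n2) (auxCode p A' j1) (hcodelt j1 h1),
        ← aux_expand (p * n2) (auxCode p A' j2) (hcodelt j2 h2)]
      exact Finset.sum_congr rfl fun i hi => by rw [hbits i (Finset.mem_range.mp hi)]
    obtain ⟨G, hG⟩ := auxMachine K hK S hmod hinj
    refine ⟨G, S 0, ?_⟩
    intro t r hr
    rw [hG t]
    refine Fin.ext ?_
    show auxCode p A' (t % K) / 2 ^ auxF p (r : ℕ) % 2 = ((A (t * p + (r : ℕ)) : Fin 2) : ℕ)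
    rw [auxF_small r.isLt, auxCode_bit p A' (t % K) (r : ℕ) r.isLt,
      hA'bit (t % K) (r : ℕ) r.isLt]
    have h1 : t = K * (t / K) + t % K := (Nat.div_add_mod t K).symm
    have ht : t * p + (r : ℕ) = ((t % K) * p + (r : ℕ)) + (t / K) * k := by
      calc t * p + (r : ℕ) = (K * (t / K) + t % K) * p + (r : ℕ) := by rw [← h1]
        _ = ((t % K) * p + (r : ℕ)) + (t / K) * (K * p) := by ring
        _ = ((t % K) * p + (r : ℕ)) + (t / K) * k := by rw [hkK]
    rw [ht, hAmul]
end
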